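/- Disintegration formula for the not-yet-treated subdistribution (unconditional form of the display proved in the paper's Lemma S.3(i)): under the nonseparable duration model with U unit exponential, letting κ denote the conditional distribution of Z given U, for every t ≥ 0: P(T ≤ t and Z > T) = ∫₀^{φ₀⁻¹(t)} κ(u)( (φ₀(u), ∞) ) · exp(−u) du. -/

import Mathlib

open MeasureTheory ProbabilityTheory Set

/-- Disintegration formula for the not-yet-treated subdistribution (unconditional form
of the display in the paper's Lemma S.3(i)): with `κ` the conditional distribution of
`Z` given `U` and `U` unit exponential,
`P(T ≤ t, Z > T) = ∫₀^{φ₀⁻¹(t)} κ(u)((φ₀(u),∞)) e^{−u} du`. -/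
theorem disintegration_not_yet_treated
    {Ω : Type*} [MeasureSpace Ω] [IsProbabilityMeasure (ℙ : Measure Ω)]
    (T Z U W : Ω → ℝ)
    (hT : Measurable T) (hZ : Measurable Z) (hU : Measurable U) (hW : Measurable W)
    (hTnn : ∀ ω, 0 ≤ T ω) (hZnn : ∀ ω, 0 ≤ Z ω) (hUnn : ∀ ω, 0 ≤ U ω)
    (φ0 φ0inv : ℝ → ℝ) (φ1 : ℝ → ℝ → ℝ)
    (hφ0mono : StrictMonoOn φ0 (Set.Ici 0))
    (hφ0nn : ∀ u, 0 ≤ u → 0 ≤ φ0 u)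
    (hφ0invnn : ∀ t, 0 ≤ t → 0 ≤ φ0inv t)
    (hφ0inv1 : ∀ u, 0 ≤ u → φ0inv (φ0 u) = u)
    (hφ0inv2 : ∀ t, 0 ≤ t → φ0 (φ0inv t) = t)
    (hφ1meas : Measurable fun p : ℝ × ℝ => φ1 p.1 p.2)
    (hφ1nn : ∀ z u, 0 ≤ z → 0 ≤ u → 0 ≤ φ1 z u)
    (hφ1mono : ∀ z, 0 ≤ z → StrictMonoOn (φ1 z) (Set.Ici 0))
    (hφ1fix : ∀ z, 0 ≤ z → φ1 z (φ0inv z) = z)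
    (hmodel : ∀ᵐ ω ∂ℙ, (φ0 (U ω) < Z ω → T ω = φ0 (U ω)) ∧
      (Z ω ≤ φ0 (U ω) → T ω = φ1 (Z ω) (U ω)))
    (hUexp : ∀ u, 0 ≤ u → ℙ {ω | U ω ≤ u} = ENNReal.ofReal (1 - Real.exp (-u))) :
    ∀ t, 0 ≤ t →
      (ℙ {ω | T ω ≤ t ∧ T ω < Z ω}).toReal
        = ∫ u in (0:ℝ)..(φ0inv t),
            (condDistrib Z U ℙ u (Set.Ioi (φ0 u))).toReal * Real.exp (-u) := by
  intro t ht
  set a := φ0inv t with ha_def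
  have ha : 0 ≤ a := hφ0invnn t ht
  set g : ℝ → ℝ := fun u => φ0 (max u 0) with hg_def
  have hgmono : Monotone g := fun x y hxy =>
    hφ0mono.monotoneOn (le_max_right x 0) (le_max_right y 0) (max_le_max hxy le_rfl)
  have hgmeas : Measurable g := hgmono.measurable
  have hgU : ∀ ω, g (U ω) = φ0 (U ω) := fun ω => by
    simp only [hg_def, max_eq_left (hUnn ω)]
  -- Step A: rewrite the event
  have hsetg : {ω | U ω ≤ a ∧ φ0 (U ω) < Z ω} = {ω | U ω ≤ a ∧ g (U ω) < Z ω} := by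
    ext ω; rw [Set.mem_setOf_eq, Set.mem_setOf_eq, hgU ω]
  have hset : ℙ {ω | T ω ≤ t ∧ T ω < Z ω} = ℙ {ω | U ω ≤ a ∧ g (U ω) < Z ω} := by
    rw [← hsetg]
    apply measure_congr
    filter_upwards [hmodel] with ω hω
    have hZnn' : (0:ℝ) ≤ Z ω := hZnn ω
    have hUnn' : (0:ℝ) ≤ U ω := hUnn ω
    show (T ω ≤ t ∧ T ω < Z ω) = (U ω ≤ a ∧ φ0 (U ω) < Z ω)
    simp only [eq_iff_iff]
    constructor
    · rintro ⟨hTt, hTZ⟩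
      rcases lt_or_ge (φ0 (U ω)) (Z ω) with hcase | hcase
      · have hTeq := hω.1 hcase
        refine ⟨?_, hcase⟩
        by_contra hlt
        push_neg at hlt
        have h1 : φ0 a < φ0 (U ω) := hφ0mono ha hUnn' hlt
        rw [hφ0inv2 t ht] at h1
        rw [hTeq] at hTt
        linarith
      · exfalso
        have hTeq := hω.2 hcase
        have hinv : φ0inv (Z ω) ≤ U ω := by
          by_contra hlt
          push_neg at hlt
          have := hφ0mono hUnn' (hφ0invnn _ hZnn') hlt
          rw [hφ0inv2 _ hZnn'] at this
          linarith
        have hle : φ1 (Z ω) (φ0inv (Z ω)) ≤ φ1 (Z ω) (U ω) :=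
          (hφ1mono (Z ω) hZnn').monotoneOn (hφ0invnn _ hZnn') hUnn' hinv
        rw [hφ1fix (Z ω) hZnn'] at hle
        rw [hTeq] at hTZ
        linarith
    · rintro ⟨hUa, hφZ⟩
      have hTeq := hω.1 hφZ
      refine ⟨?_, by rw [hTeq]; exact hφZ⟩
      rw [hTeq]
      calc φ0 (U ω) ≤ φ0 a := hφ0mono.monotoneOn hUnn' ha hUa
        _ = t := hφ0inv2 t ht
  -- Step B/C: disintegration via condDistrib
  have hmap : Measure.map (fun ω => (U ω, Z ω)) ℙ = (Measure.map U ℙ) ⊗ₘ condDistrib Z U ℙ := by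
    rw [condDistrib]
    conv_lhs => rw [← Measure.disintegrate (Measure.map (fun ω => (U ω, Z ω)) ℙ) (Measure.map (fun ω => (U ω, Z ω)) ℙ).condKernel]
    congr 1
    exact Measure.fst_map_prodMk hZ
  have hS : MeasurableSet {p : ℝ × ℝ | p.1 ≤ a ∧ g p.1 < p.2} := by
    refine MeasurableSet.inter ?_ ?_
    · exact measurable_fst measurableSet_Iic
    · exact measurableSet_lt (hgmeas.comp measurable_fst) measurable_snd
  have hPS : ℙ {ω | U ω ≤ a ∧ g (U ω) < Z ω}
      = ∫⁻ u, Set.indicator (Iic a) (fun u => condDistrib Z U ℙ u (Ioi (g u))) u ∂(Measure.map U ℙ) := by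
    have hpre : {ω | U ω ≤ a ∧ g (U ω) < Z ω}
        = (fun ω => (U ω, Z ω)) ⁻¹' {p : ℝ × ℝ | p.1 ≤ a ∧ g p.1 < p.2} := rfl
    rw [hpre, ← Measure.map_apply (hU.prodMk hZ) hS, hmap, Measure.compProd_apply hS]
    refine lintegral_congr fun u => ?_
    by_cases hu : u ≤ a
    · rw [Set.indicator_of_mem (mem_Iic.mpr hu)]
      congr 1
      ext z
      simp [hu]
    · rw [Set.indicator_of_notMem (fun h => hu (mem_Iic.mp h))]
      have hemp : Prod.mk u ⁻¹' {p : ℝ × ℝ | p.1 ≤ a ∧ g p.1 < p.2} = ∅ := by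
        ext z; simp [hu]
      simp [hemp]
  -- Step D: law of U has exponential density
  set f : ℝ → ENNReal := (Ici (0:ℝ)).indicator (fun u => ENNReal.ofReal (Real.exp (-u)))
    with hf_def
  have hfmeas : Measurable f :=
    Measurable.indicator ((Real.measurable_exp.comp measurable_neg).ennreal_ofReal)
      measurableSet_Ici
  have hfint : ∀ u : ℝ, ∫⁻ x in Iic u, f x = ENNReal.ofReal (1 - Real.exp (-u)) := by
    intro u
    rw [hf_def, lintegral_indicator measurableSet_Ici _, Measure.restrict_restrict
      measurableSet_Ici]
    have hIcc : Ici (0:ℝ) ∩ Iic u = Icc 0 u := rfl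
    rw [hIcc]
    rcases le_or_gt 0 u with hu | hu
    · have hInt : IntegrableOn (fun x => Real.exp (-x)) (Icc 0 u) :=
        (Real.continuous_exp.comp continuous_neg).integrableOn_Icc
      rw [← ofReal_integral_eq_lintegral_ofReal hInt
          (Filter.Eventually.of_forall fun x => (Real.exp_pos _).le)]
      congr 1
      rw [MeasureTheory.integral_Icc_eq_integral_Ioc,
        ← intervalIntegral.integral_of_le hu, intervalIntegral.integral_comp_neg,
        integral_exp]
      simp
    · rw [Set.Icc_eq_empty (by linarith), Measure.restrict_empty, lintegral_zero_measure]
      symm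
      rw [ENNReal.ofReal_eq_zero, sub_nonpos]
      exact Real.one_le_exp (by linarith)
  haveI : IsProbabilityMeasure (Measure.map U ℙ) := Measure.isProbabilityMeasure_map hU.aemeasurable
  have hmapU : Measure.map U ℙ = volume.withDensity f := by
    refine Measure.ext_of_Iic (Measure.map U ℙ) _ fun b => ?_
    rw [Measure.map_apply hU measurableSet_Iic, withDensity_apply f measurableSet_Iic, hfint b]
    rcases le_or_gt 0 b with hb | hb
    · exact hUexp b hb
    · have hemp : U ⁻¹' Iic b = ∅ := by
        ext ω; simp only [mem_preimage, mem_Iic, mem_empty_iff_false, iff_false, not_le]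
        exact lt_of_lt_of_le hb (hUnn ω)
      rw [hemp, measure_empty]
      symm
      rw [ENNReal.ofReal_eq_zero, sub_nonpos]
      exact Real.one_le_exp (by linarith)
  -- measurability of the kernel integrand
  have hκmeas : Measurable fun u => condDistrib Z U ℙ u (Ioi (g u)) := by
    have hS2 : MeasurableSet {p : ℝ × ℝ | g p.1 < p.2} :=
      measurableSet_lt (hgmeas.comp measurable_fst) measurable_snd
    exact Kernel.measurable_kernel_prodMk_left (κ := condDistrib Z U ℙ) hS2
  -- Step E: compute the lintegral with the density
  have hE : (∫⁻ u, Set.indicator (Iic a) (fun u => condDistrib Z U ℙ u (Ioi (g u))) u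
        ∂(volume.withDensity f))
      = ∫⁻ u in Ioc 0 a,
          condDistrib Z U ℙ u (Ioi (g u)) * ENNReal.ofReal (Real.exp (-u)) := by
    rw [lintegral_withDensity_eq_lintegral_mul _ hfmeas
      (hκmeas.indicator measurableSet_Iic)]
    have hcong : ∀ u, (f * fun u =>
          Set.indicator (Iic a) (fun u => condDistrib Z U ℙ u (Ioi (g u))) u) u
        = Set.indicator (Icc 0 a)
            (fun u => condDistrib Z U ℙ u (Ioi (g u)) * ENNReal.ofReal (Real.exp (-u))) u := by
      intro u
      simp only [Pi.mul_apply, hf_def, Set.indicator]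
      by_cases h0 : (0:ℝ) ≤ u <;> by_cases hua : u ≤ a <;>
        simp [h0, hua, mem_Icc, mem_Ici, mem_Iic, mul_comm]
    rw [lintegral_congr hcong, lintegral_indicator measurableSet_Icc _]
    exact (setLIntegral_congr Ioc_ae_eq_Icc).symm
  -- Step F: the interval integral equals the toReal of the lintegral
  have hRHS : (∫ u in (0:ℝ)..a, (condDistrib Z U ℙ u (Ioi (φ0 u))).toReal * Real.exp (-u))
      = (∫⁻ u in Ioc 0 a,
          condDistrib Z U ℙ u (Ioi (g u)) * ENNReal.ofReal (Real.exp (-u))).toReal := by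
    rw [intervalIntegral.integral_of_le ha]
    have hcongr : ∀ u ∈ Ioc (0:ℝ) a,
        (condDistrib Z U ℙ u (Ioi (φ0 u))).toReal * Real.exp (-u)
          = (condDistrib Z U ℙ u (Ioi (g u))).toReal * Real.exp (-u) := by
      intro u hu
      have : g u = φ0 u := by simp only [hg_def, max_eq_left hu.1.le]
      rw [this]
    rw [setIntegral_congr_fun measurableSet_Ioc hcongr]
    rw [MeasureTheory.integral_eq_lintegral_of_nonneg_ae
      (Filter.Eventually.of_forall fun u =>
        mul_nonneg ENNReal.toReal_nonneg (Real.exp_pos _).le)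
      ((hκmeas.ennreal_toReal.mul
        (Real.measurable_exp.comp measurable_neg)).aestronglyMeasurable)]
    congr 1
    refine lintegral_congr fun u => ?_
    haveI : IsProbabilityMeasure (condDistrib Z U ℙ u) :=
      IsMarkovKernel.isProbabilityMeasure u
    rw [ENNReal.ofReal_mul ENNReal.toReal_nonneg,
      ENNReal.ofReal_toReal (measure_ne_top _ _)]
  rw [hset, hPS, hmapU, hE, hRHS]
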